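/- Let ρ : (0,∞) → ℝ be C² and r(ξ) = ρ(|ξ|). For ξ = R·e^{iθ} with R > 0, the two focal points of the normal line congruence through ξ, namely Φ(ξ, F(ξ), −ψ(ξ)+|σ(ξ)|) and Φ(ξ, F(ξ), −ψ(ξ)−|σ(ξ)|), are equal, in some order, to the two points (z₁, t₁) and (0, t₂) of ℂ × ℝ, where z₁ = (1/2)·(−R(1+R²)ρ''(R) + (1−3R²)ρ'(R))·e^{iθ}, t₁ = (1/4)·(−(1−R⁴)ρ''(R) − 2R(3−R²)ρ'(R)), and t₂ = −((1+R²)²/(4R))·ρ'(R). -/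

import Mathlib

open Complex MeasureTheory ComplexConjugate

noncomputable section

/-- Wirtinger derivative ∂/∂ξ of a complex-valued function. -/
def wd (f : ℂ → ℂ) (ξ : ℂ) : ℂ :=
  (1 / 2) * (fderiv ℝ f ξ 1 - Complex.I * fderiv ℝ f ξ Complex.I)

/-- Wirtinger derivative ∂/∂ξ̄ of a real-valued function, as a complex number. -/
def wdbarR (r : ℂ → ℝ) (ξ : ℂ) : ℂ :=
  (1 / 2) * ((fderiv ℝ r ξ 1 : ℝ) + Complex.I * (fderiv ℝ r ξ Complex.I : ℝ))

/-- F = (1/2)(1+|ξ|²)² ∂r/∂ξ̄. -/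
def Fcong (r : ℂ → ℝ) (ξ : ℂ) : ℂ :=
  (1 / 2) * ((1 + Complex.normSq ξ) ^ 2 : ℝ) * wdbarR r ξ

/-- ψ = (1+|ξ|²)² ∂/∂ξ [F/(1+|ξ|²)²] (real-valued). -/
def psiSlope (r : ℂ → ℝ) (ξ : ℂ) : ℝ :=
  (((1 + Complex.normSq ξ) ^ 2 : ℝ) *
    wd (fun z => Fcong r z / (((1 + Complex.normSq z) ^ 2 : ℝ) : ℂ)) ξ).re

/-- σ = −∂(conj F)/∂ξ. -/
def sigmaSlope (r : ℂ → ℝ) (ξ : ℂ) : ℂ :=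
  - wd (fun z => conj (Fcong r z)) ξ

/-- The round sphere area measure in the stereographic coordinate. -/
def muSphere : Measure ℂ :=
  volume.withDensity fun ξ => ENNReal.ofReal (4 / (1 + Complex.normSq ξ) ^ 2)

/-- Constant width w: r(ξ) + r(−1/conj ξ) = w for all ξ ≠ 0. -/
def ConstWidth (r : ℂ → ℝ) (w : ℝ) : Prop :=
  ∀ ξ : ℂ, ξ ≠ 0 → r ξ + r (-1 / conj ξ) = w

/-- The map `Φ : 𝕃 × ℝ → ℝ³ ≃ ℂ × ℝ` of the correspondence space. -/
def Phi (ξ η : ℂ) (r : ℝ) : ℂ × ℝ :=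
  ((2 * (η - conj η * ξ ^ 2) + 2 * ξ * ((1 + Complex.normSq ξ : ℝ) : ℂ) * (r : ℂ))
      / (((1 + Complex.normSq ξ) ^ 2 : ℝ) : ℂ),
   ((-2 * (η * conj ξ + conj η * ξ)
        + (((1 - Complex.normSq ξ * Complex.normSq ξ) * r : ℝ) : ℂ))).re
      / (1 + Complex.normSq ξ) ^ 2)

/-- Proposition `p:rotfoc`: the focal set of the normal lines of a
rotationally symmetric surface consists of the profile surface of revolution and a
piece of the axis of symmetry. -/
lemma habsD {ξ : ℂ} (hξ : ξ ≠ 0) :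
    HasFDerivAt (fun z : ℂ => ‖z‖)
      ((‖ξ‖)⁻¹ • (ξ.re • Complex.reCLM + ξ.im • Complex.imCLM)) ξ := by
  have hre := (Complex.reCLM.hasFDerivAt (x := ξ))
  have him := (Complex.imCLM.hasFDerivAt (x := ξ))
  have hns : HasFDerivAt Complex.normSq
      ((2 * ξ.re) • Complex.reCLM + (2 * ξ.im) • Complex.imCLM) ξ := by
    have h := (hre.mul hre).add (him.mul him)
    have : Complex.normSq = fun z : ℂ => z.re * z.re + z.im * z.im := by
      funext z; simp [Complex.normSq_apply]
    rw [this]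
    refine h.congr_fderiv ?_
    symm
    ext v
    simp [two_mul, smul_eq_mul]
    ring
  have h0 : Complex.normSq ξ ≠ 0 := by simpa using hξ
  have hs : HasDerivAt Real.sqrt (1 / (2 * Real.sqrt (Complex.normSq ξ))) (Complex.normSq ξ) :=
    Real.hasDerivAt_sqrt h0
  have habs : (fun z : ℂ => ‖z‖) = fun z : ℂ => Real.sqrt (Complex.normSq z) := by
    funext z; exact Complex.norm_def z
  have h := hs.comp_hasFDerivAt ξ hns
  rw [habs]
  refine h.congr_fderiv ?_
  symm
  have hRpos : 0 < ‖ξ‖ := norm_pos_iff.mpr hξ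
  have hsq : Real.sqrt (Complex.normSq ξ) = ‖ξ‖ := (Complex.norm_def ξ).symm
  ext v
  simp [hsq, smul_eq_mul]
  field_simp

lemma hcompD {ξ : ℂ} (hξ : ξ ≠ 0) {φ : ℝ → ℝ} {p : ℝ}
    (hφ : HasDerivAt φ p (‖ξ‖)) :
    HasFDerivAt (fun z => φ (‖z‖))
      ((p / ‖ξ‖) • (ξ.re • Complex.reCLM + ξ.im • Complex.imCLM)) ξ := by
  have h := hφ.comp_hasFDerivAt ξ (habsD hξ)
  rw [div_eq_mul_inv, ← smul_smul]
  exact h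

/-- wdbar of a radial real function. -/
lemma wdbarR_radial {ξ : ℂ} (hξ : ξ ≠ 0) {φ : ℝ → ℝ} {p : ℝ}
    (hφ : HasDerivAt φ p (‖ξ‖)) :
    wdbarR (fun z => φ (‖z‖)) ξ = ((p / (2 * ‖ξ‖) : ℝ) : ℂ) * ξ := by
  have hD := (hcompD hξ hφ).fderiv
  rw [wdbarR, hD]
  have hR : ‖ξ‖ ≠ 0 := by simpa using hξ
  simp only [ContinuousLinearMap.smul_apply, ContinuousLinearMap.add_apply,
    Complex.reCLM_apply, Complex.imCLM_apply, smul_eq_mul,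
    Complex.one_re, Complex.one_im, Complex.I_re, Complex.I_im]
  have hRC : (‖ξ‖ : ℂ) ≠ 0 := Complex.ofReal_ne_zero.2 hR
  rw [← Complex.re_add_im ξ]
  push_cast
  field_simp
  apply Complex.ext <;> simp

lemma wd_radial_mul_id {ξ : ℂ} (hξ : ξ ≠ 0) {φ : ℝ → ℝ} {p : ℝ}
    (hφ : HasDerivAt φ p (‖ξ‖)) :
    wd (fun z => ((φ (‖z‖) : ℝ) : ℂ) * z) ξ =
      ((φ (‖ξ‖) + p * ‖ξ‖ / 2 : ℝ) : ℂ) := by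
  have hR : ‖ξ‖ ≠ 0 := by simpa using hξ
  have hc : HasFDerivAt (fun z => ((φ (‖z‖) : ℝ) : ℂ))
      (Complex.ofRealCLM.comp ((p / ‖ξ‖) •
        (ξ.re • Complex.reCLM + ξ.im • Complex.imCLM))) ξ :=
    Complex.ofRealCLM.hasFDerivAt.comp ξ (hcompD hξ hφ)
  have hd : HasFDerivAt (fun z : ℂ => z) (ContinuousLinearMap.id ℝ ℂ) ξ := hasFDerivAt_id ξ
  have hD : fderiv ℝ (fun z => ((φ (‖z‖) : ℝ) : ℂ) * z) ξ = _ := (hc.mul hd).fderiv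
  rw [wd, hD]
  have hsq := Complex.sq_norm ξ
  rw [Complex.normSq_apply] at hsq
  simp only [ContinuousLinearMap.add_apply, ContinuousLinearMap.coe_smul',
    Pi.smul_apply, ContinuousLinearMap.coe_comp', Function.comp_apply,
    ContinuousLinearMap.smul_apply, ContinuousLinearMap.coe_id', id_eq,
    Complex.reCLM_apply, Complex.imCLM_apply, Complex.ofRealCLM_apply,
    smul_eq_mul, Complex.one_re, Complex.one_im, Complex.I_re, Complex.I_im]
  apply Complex.ext
  · simp [Complex.ext_iff]
    field_simp
    linear_combination (-p) * hsq
  · simp [Complex.ext_iff]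
    field_simp
    try ring

lemma wd_radial_mul_conj {ξ : ℂ} (hξ : ξ ≠ 0) {φ : ℝ → ℝ} {p : ℝ}
    (hφ : HasDerivAt φ p (‖ξ‖)) :
    wd (fun z => ((φ (‖z‖) : ℝ) : ℂ) * conj z) ξ =
      ((p / (2 * ‖ξ‖) : ℝ) : ℂ) * (conj ξ) ^ 2 := by
  have hR : ‖ξ‖ ≠ 0 := by simpa using hξ
  have hc : HasFDerivAt (fun z => ((φ (‖z‖) : ℝ) : ℂ))
      (Complex.ofRealCLM.comp ((p / ‖ξ‖) •
        (ξ.re • Complex.reCLM + ξ.im • Complex.imCLM))) ξ :=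
    Complex.ofRealCLM.hasFDerivAt.comp ξ (hcompD hξ hφ)
  have hd : HasFDerivAt (fun z : ℂ => conj z)
      (Complex.conjCLE.toContinuousLinearMap) ξ :=
    Complex.conjCLE.toContinuousLinearMap.hasFDerivAt
  have hD : fderiv ℝ (fun z => ((φ (‖z‖) : ℝ) : ℂ) * conj z) ξ = _ := (hc.mul hd).fderiv
  rw [wd, hD]
  have hsq := Complex.sq_norm ξ
  rw [Complex.normSq_apply] at hsq
  simp only [ContinuousLinearMap.add_apply, ContinuousLinearMap.coe_smul',
    Pi.smul_apply, ContinuousLinearMap.coe_comp', Function.comp_apply,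
    ContinuousLinearMap.smul_apply, Complex.reCLM_apply, Complex.imCLM_apply,
    Complex.ofRealCLM_apply, smul_eq_mul,
    Complex.one_re, Complex.one_im, Complex.I_re, Complex.I_im]
  simp only [Complex.conjCLE_apply, ContinuousLinearEquiv.coe_coe]
  set c := p / (2 * ‖ξ‖) with hc0
  clear_value c
  apply Complex.ext
  · simp [Complex.ext_iff, pow_two, Complex.mul_re, Complex.mul_im,
      Complex.inv_re, Complex.inv_im, Complex.normSq_apply]
    rw [hc0]
    field_simp
    try linear_combination (-(2 * p)) * hsq
    try linear_combination (2 * p) * hsq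
    try ring
  · simp [Complex.ext_iff, pow_two, Complex.mul_re, Complex.mul_im,
      Complex.inv_re, Complex.inv_im, Complex.normSq_apply]
    rw [hc0]
    field_simp
    try linear_combination (-(2 * p)) * hsq
    try linear_combination (2 * p) * hsq
    try ring

section Main
variable {ρ : ℝ → ℝ} (hρ : ContDiffOn ℝ 2 ρ (Set.Ioi 0))

lemma hP' (hρ : ContDiffOn ℝ 2 ρ (Set.Ioi 0)) {R : ℝ} (hR : 0 < R) :
    HasDerivAt ρ (deriv ρ R) R := by
  have h1 : DifferentiableOn ℝ ρ (Set.Ioi 0) := hρ.differentiableOn (by norm_num)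
  exact ((h1 R hR).differentiableAt (Ioi_mem_nhds hR)).hasDerivAt

lemma hQ' (hρ : ContDiffOn ℝ 2 ρ (Set.Ioi 0)) {R : ℝ} (hR : 0 < R) :
    HasDerivAt (deriv ρ) (deriv (deriv ρ) R) R := by
  have h2 : ContDiffOn ℝ 1 (deriv ρ) (Set.Ioi 0) :=
    hρ.deriv_of_isOpen isOpen_Ioi (by norm_num)
  have h1 : DifferentiableOn ℝ (deriv ρ) (Set.Ioi 0) := h2.differentiableOn (by norm_num)
  exact ((h1 R hR).differentiableAt (Ioi_mem_nhds hR)).hasDerivAt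

lemma Fcong_radial (hρ : ContDiffOn ℝ 2 ρ (Set.Ioi 0)) {r : ℂ → ℝ}
    (hr : ∀ ξ : ℂ, r ξ = ρ (‖ξ‖)) {z : ℂ} (hz : z ≠ 0) :
    Fcong r z = (((1 + ‖z‖ ^ 2) ^ 2 * deriv ρ (‖z‖)
        / (4 * ‖z‖) : ℝ) : ℂ) * z := by
  have hrfun : r = fun w => ρ (‖w‖) := funext hr
  subst hrfun
  have hRpos : 0 < ‖z‖ := norm_pos_iff.mpr hz
  rw [Fcong, wdbarR_radial hz (hP' hρ hRpos), ← Complex.sq_norm z]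
  have hR : ‖z‖ ≠ 0 := ne_of_gt hRpos
  push_cast
  have hRC : (‖z‖ : ℂ) ≠ 0 := Complex.ofReal_ne_zero.2 hR
  field_simp
  ring

lemma psi_radial (hρ : ContDiffOn ℝ 2 ρ (Set.Ioi 0)) {r : ℂ → ℝ}
    (hr : ∀ ξ : ℂ, r ξ = ρ (‖ξ‖)) {ξ : ℂ} (hξ : ξ ≠ 0) :
    psiSlope r ξ = (1 + ‖ξ‖ ^ 2) ^ 2 *
      (deriv ρ (‖ξ‖) + ‖ξ‖ * deriv (deriv ρ) (‖ξ‖))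
        / (8 * ‖ξ‖) := by
  have hRpos : 0 < ‖ξ‖ := norm_pos_iff.mpr hξ
  have hR : ‖ξ‖ ≠ 0 := ne_of_gt hRpos
  have hmem : {z : ℂ | z ≠ 0} ∈ nhds ξ := isOpen_ne.mem_nhds hξ
  have heq : (fun z => Fcong r z / (((1 + Complex.normSq z) ^ 2 : ℝ) : ℂ)) =ᶠ[nhds ξ]
      (fun z => ((deriv ρ (‖z‖) / (4 * ‖z‖) : ℝ) : ℂ) * z) := by
    filter_upwards [hmem] with z hz
    have hz0 : ‖z‖ ≠ 0 := ne_of_gt (norm_pos_iff.mpr hz)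
    rw [Fcong_radial hρ hr hz, ← Complex.sq_norm z]
    have h1 : (1 : ℝ) + ‖z‖ ^ 2 ≠ 0 := by positivity
    push_cast
    have h1C : (1 : ℂ) + (‖z‖ : ℂ) ^ 2 ≠ 0 := by
      rw [show (1 : ℂ) + (‖z‖ : ℂ) ^ 2 = ((1 + ‖z‖ ^ 2 : ℝ) : ℂ) by
        push_cast; ring]
      exact Complex.ofReal_ne_zero.2 h1
    have hzC : (‖z‖ : ℂ) ≠ 0 := Complex.ofReal_ne_zero.2 hz0
    field_simp
  have hh : HasDerivAt (fun s => deriv ρ s / (4 * s))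
      ((deriv (deriv ρ) (‖ξ‖) * (4 * ‖ξ‖) -
        deriv ρ (‖ξ‖) * 4) / (4 * ‖ξ‖) ^ 2) (‖ξ‖) := by
    refine (hQ' hρ hRpos).div ?_ (by positivity)
    simpa using (hasDerivAt_id (‖ξ‖)).const_mul (4 : ℝ)
  have hwd : wd (fun z => Fcong r z / (((1 + Complex.normSq z) ^ 2 : ℝ) : ℂ)) ξ
      = wd (fun z => ((deriv ρ (‖z‖) / (4 * ‖z‖) : ℝ) : ℂ) * z) ξ := by
    rw [wd, wd, heq.fderiv_eq]
  rw [psiSlope, hwd, wd_radial_mul_id hξ hh, ← Complex.sq_norm ξ,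
    ← Complex.ofReal_mul, Complex.ofReal_re]
  field_simp
  ring

lemma sigma_radial (hρ : ContDiffOn ℝ 2 ρ (Set.Ioi 0)) {r : ℂ → ℝ}
    (hr : ∀ ξ : ℂ, r ξ = ρ (‖ξ‖)) {ξ : ℂ} (hξ : ξ ≠ 0) :
    ‖(sigmaSlope r ξ)‖ = (1 + ‖ξ‖ ^ 2) *
      |‖ξ‖ * (1 + ‖ξ‖ ^ 2) * deriv (deriv ρ) (‖ξ‖)
        + (3 * ‖ξ‖ ^ 2 - 1) * deriv ρ (‖ξ‖)| / (8 * ‖ξ‖) := by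
  have hRpos : 0 < ‖ξ‖ := norm_pos_iff.mpr hξ
  have hR : ‖ξ‖ ≠ 0 := ne_of_gt hRpos
  have hmem : {z : ℂ | z ≠ 0} ∈ nhds ξ := isOpen_ne.mem_nhds hξ
  have heq : (fun z => conj (Fcong r z)) =ᶠ[nhds ξ]
      (fun z => (((1 + ‖z‖ ^ 2) ^ 2 * deriv ρ (‖z‖)
          / (4 * ‖z‖) : ℝ) : ℂ) * conj z) := by
    filter_upwards [hmem] with z hz
    rw [Fcong_radial hρ hr hz, map_mul, Complex.conj_ofReal]
  set R := ‖ξ‖ with hRdef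
  have hnum : HasDerivAt (fun s : ℝ => (1 + s ^ 2) ^ 2 * deriv ρ s)
      ((2 * (1 + R ^ 2) ^ 1 * (2 * R)) * deriv ρ R
        + (1 + R ^ 2) ^ 2 * deriv (deriv ρ) R) R := by
    have h0 : HasDerivAt (fun s : ℝ => 1 + s ^ 2) (2 * R) R := by
      simpa using (hasDerivAt_pow 2 R).const_add (1 : ℝ)
    exact ((h0.pow 2).mul (hQ' hρ hRpos))
  have hG : HasDerivAt (fun s : ℝ => (1 + s ^ 2) ^ 2 * deriv ρ s / (4 * s))
      ((((2 * (1 + R ^ 2) ^ 1 * (2 * R)) * deriv ρ R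
          + (1 + R ^ 2) ^ 2 * deriv (deriv ρ) R) * (4 * R)
        - (1 + R ^ 2) ^ 2 * deriv ρ R * 4) / (4 * R) ^ 2) R := by
    refine hnum.div ?_ (by positivity)
    simpa using (hasDerivAt_id R).const_mul (4 : ℝ)
  have hwd : wd (fun z => conj (Fcong r z)) ξ
      = wd (fun z => (((1 + ‖z‖ ^ 2) ^ 2 * deriv ρ (‖z‖)
          / (4 * ‖z‖) : ℝ) : ℂ) * conj z) ξ := by
    rw [wd, wd, heq.fderiv_eq]
  rw [sigmaSlope, hwd, wd_radial_mul_conj hξ hG]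
  set q := (((2 * (1 + R ^ 2) ^ 1 * (2 * R)) * deriv ρ R
          + (1 + R ^ 2) ^ 2 * deriv (deriv ρ) R) * (4 * R)
        - (1 + R ^ 2) ^ 2 * deriv ρ R * 4) / (4 * R) ^ 2 with hq
  have hqval : q = (1 + R ^ 2) * (R * (1 + R ^ 2) * deriv (deriv ρ) R
      + (3 * R ^ 2 - 1) * deriv ρ R) / (4 * R ^ 2) := by
    rw [hq]
    field_simp
    ring
  rw [norm_neg, norm_mul, norm_pow, Complex.norm_conj, Complex.norm_real, Real.norm_eq_abs, ← hRdef,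
    hqval]
  rw [abs_div, abs_div, abs_mul]
  rw [abs_of_pos (by positivity : (0:ℝ) < 1 + R ^ 2),
    abs_of_pos (by positivity : (0:ℝ) < 4 * R ^ 2),
    abs_of_pos (by positivity : (0:ℝ) < 2 * R)]
  field_simp
  ring

end Main

lemma Phi_eval (ξ : ℂ) (c t : ℝ) :
    Phi ξ (((c : ℝ) : ℂ) * ξ) t =
      ((((2 * c * (1 - Complex.normSq ξ) + 2 * (1 + Complex.normSq ξ) * t)
          / (1 + Complex.normSq ξ) ^ 2 : ℝ) : ℂ) * ξ,
        (-4 * c * Complex.normSq ξ + (1 - Complex.normSq ξ * Complex.normSq ξ) * t)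
          / (1 + Complex.normSq ξ) ^ 2) := by
  have hN : (0:ℝ) ≤ Complex.normSq ξ := Complex.normSq_nonneg ξ
  have h1 : (1 + Complex.normSq ξ) ^ 2 ≠ 0 := by positivity
  have h1C : (((1 + Complex.normSq ξ) ^ 2 : ℝ) : ℂ) ≠ 0 := Complex.ofReal_ne_zero.2 h1
  rw [Phi, Prod.mk.injEq]
  constructor
  · rw [show (((2 * c * (1 - Complex.normSq ξ) + 2 * (1 + Complex.normSq ξ) * t)
          / (1 + Complex.normSq ξ) ^ 2 : ℝ) : ℂ) * ξ
        = (((2 * c * (1 - Complex.normSq ξ) + 2 * (1 + Complex.normSq ξ) * t : ℝ) : ℂ) * ξ)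
            / (((1 + Complex.normSq ξ) ^ 2 : ℝ) : ℂ) from by
      rw [Complex.ofReal_div]; ring]
    congr 1
    simp only [map_mul, Complex.conj_ofReal]
    push_cast
    linear_combination (-(2 * (c:ℂ) * ξ)) * (Complex.mul_conj ξ)
  · congr 1
    rw [show (-2 * ((((c : ℝ) : ℂ) * ξ) * conj ξ + conj (((c : ℝ) : ℂ) * ξ) * ξ)
        + (((1 - Complex.normSq ξ * Complex.normSq ξ) * t : ℝ) : ℂ))
        = (((-4 * c * Complex.normSq ξ + (1 - Complex.normSq ξ * Complex.normSq ξ) * t : ℝ)) : ℂ) from by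
      simp only [map_mul, Complex.conj_ofReal]
      push_cast
      linear_combination (-4 * (c:ℂ)) * (Complex.mul_conj ξ)]
    exact Complex.ofReal_re _

theorem rotationally_symmetric_focal_points
    (ρ : ℝ → ℝ) (hρ : ContDiffOn ℝ 2 ρ (Set.Ioi 0))
    (r : ℂ → ℝ) (hr : ∀ ξ : ℂ, r ξ = ρ (‖ξ‖)) :
    ∀ R θ : ℝ, 0 < R →
      (Phi ((R : ℂ) * Complex.exp (θ * Complex.I))
            (Fcong r ((R : ℂ) * Complex.exp (θ * Complex.I)))
            (-psiSlope r ((R : ℂ) * Complex.exp (θ * Complex.I))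
              + ‖sigmaSlope r ((R : ℂ) * Complex.exp (θ * Complex.I))‖),
        Phi ((R : ℂ) * Complex.exp (θ * Complex.I))
            (Fcong r ((R : ℂ) * Complex.exp (θ * Complex.I)))
            (-psiSlope r ((R : ℂ) * Complex.exp (θ * Complex.I))
              - ‖sigmaSlope r ((R : ℂ) * Complex.exp (θ * Complex.I))‖)) =
        ((((1 / 2) * (-R * (1 + R ^ 2) * deriv (deriv ρ) R
              + (1 - 3 * R ^ 2) * deriv ρ R) : ℝ) * Complex.exp (θ * Complex.I),
          (1 / 4) * (-(1 - R ^ 4) * deriv (deriv ρ) R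
              - 2 * R * (3 - R ^ 2) * deriv ρ R)),
         ((0 : ℂ), -((1 + R ^ 2) ^ 2 / (4 * R)) * deriv ρ R)) ∨
      (Phi ((R : ℂ) * Complex.exp (θ * Complex.I))
            (Fcong r ((R : ℂ) * Complex.exp (θ * Complex.I)))
            (-psiSlope r ((R : ℂ) * Complex.exp (θ * Complex.I))
              + ‖sigmaSlope r ((R : ℂ) * Complex.exp (θ * Complex.I))‖),
        Phi ((R : ℂ) * Complex.exp (θ * Complex.I))
            (Fcong r ((R : ℂ) * Complex.exp (θ * Complex.I)))
            (-psiSlope r ((R : ℂ) * Complex.exp (θ * Complex.I))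
              - ‖sigmaSlope r ((R : ℂ) * Complex.exp (θ * Complex.I))‖)) =
        ((((0 : ℂ), -((1 + R ^ 2) ^ 2 / (4 * R)) * deriv ρ R)),
         ((((1 / 2) * (-R * (1 + R ^ 2) * deriv (deriv ρ) R
              + (1 - 3 * R ^ 2) * deriv ρ R) : ℝ) * Complex.exp (θ * Complex.I),
          (1 / 4) * (-(1 - R ^ 4) * deriv (deriv ρ) R
              - 2 * R * (3 - R ^ 2) * deriv ρ R)))) := by
  intro R θ hRpos
  set ξ := (R : ℂ) * Complex.exp (θ * Complex.I) with hξdef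
  have hexp : Complex.exp ((θ : ℂ) * Complex.I) ≠ 0 := Complex.exp_ne_zero _
  have hξ : ξ ≠ 0 := by
    rw [hξdef]
    exact mul_ne_zero (Complex.ofReal_ne_zero.2 (ne_of_gt hRpos)) hexp
  have hR0 : R ≠ 0 := ne_of_gt hRpos
  have habs : ‖ξ‖ = R := by
    rw [hξdef, norm_mul, Complex.norm_real, Real.norm_eq_abs, Complex.norm_exp_ofReal_mul_I,
      abs_of_pos hRpos, mul_one]
  have hN : Complex.normSq ξ = R ^ 2 := by rw [← Complex.sq_norm, habs]
  have h1R : (0:ℝ) < 1 + R ^ 2 := by positivity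
  have hF : Fcong r ξ = (((1 + R ^ 2) ^ 2 * deriv ρ R / (4 * R) : ℝ) : ℂ) * ξ := by
    rw [Fcong_radial hρ hr hξ, habs]
  have hψ : psiSlope r ξ = (1 + R ^ 2) ^ 2 * (deriv ρ R + R * deriv (deriv ρ) R)
      / (8 * R) := by rw [psi_radial hρ hr hξ, habs]
  have hσ : ‖(sigmaSlope r ξ)‖ = (1 + R ^ 2) *
      |R * (1 + R ^ 2) * deriv (deriv ρ) R + (3 * R ^ 2 - 1) * deriv ρ R|
        / (8 * R) := by rw [sigma_radial hρ hr hξ, habs]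
  set P := deriv ρ R with hP
  set Q := deriv (deriv ρ) R with hQ
  -- profile point evaluation
  have hprofile : Phi ξ (Fcong r ξ)
      (-((1 + R ^ 2) ^ 2 * (P + R * Q) / (8 * R))
        - (1 + R ^ 2) * (R * (1 + R ^ 2) * Q + (3 * R ^ 2 - 1) * P) / (8 * R)) =
      ((((1 / 2) * (-R * (1 + R ^ 2) * Q + (1 - 3 * R ^ 2) * P) : ℝ) : ℂ)
          * Complex.exp ((θ : ℂ) * Complex.I),
        (1 / 4) * (-(1 - R ^ 4) * Q - 2 * R * (3 - R ^ 2) * P)) := by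
    rw [hF, Phi_eval, hN, Prod.mk.injEq]
    constructor
    · rw [hξdef, show ((((2 * ((1 + R ^ 2) ^ 2 * P / (4 * R)) * (1 - R ^ 2)
          + 2 * (1 + R ^ 2) * (-((1 + R ^ 2) ^ 2 * (P + R * Q) / (8 * R))
            - (1 + R ^ 2) * (R * (1 + R ^ 2) * Q + (3 * R ^ 2 - 1) * P) / (8 * R)))
          / (1 + R ^ 2) ^ 2 : ℝ)) : ℂ) * ((R : ℂ) * Complex.exp ((θ : ℂ) * Complex.I))
          = ((((2 * ((1 + R ^ 2) ^ 2 * P / (4 * R)) * (1 - R ^ 2)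
          + 2 * (1 + R ^ 2) * (-((1 + R ^ 2) ^ 2 * (P + R * Q) / (8 * R))
            - (1 + R ^ 2) * (R * (1 + R ^ 2) * Q + (3 * R ^ 2 - 1) * P) / (8 * R)))
          / (1 + R ^ 2) ^ 2 * R : ℝ)) : ℂ) * Complex.exp ((θ : ℂ) * Complex.I) from by
        push_cast; ring]
      congr 2
      field_simp
      ring
    · field_simp
      ring
  -- axis point evaluation
  have haxis : Phi ξ (Fcong r ξ)
      (-((1 + R ^ 2) ^ 2 * (P + R * Q) / (8 * R))
        + (1 + R ^ 2) * (R * (1 + R ^ 2) * Q + (3 * R ^ 2 - 1) * P) / (8 * R)) =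
      ((0 : ℂ), -((1 + R ^ 2) ^ 2 / (4 * R)) * P) := by
    rw [hF, Phi_eval, hN, Prod.mk.injEq]
    constructor
    · rw [show ((2 * ((1 + R ^ 2) ^ 2 * P / (4 * R)) * (1 - R ^ 2)
          + 2 * (1 + R ^ 2) * (-((1 + R ^ 2) ^ 2 * (P + R * Q) / (8 * R))
            + (1 + R ^ 2) * (R * (1 + R ^ 2) * Q + (3 * R ^ 2 - 1) * P) / (8 * R)))
          / (1 + R ^ 2) ^ 2 : ℝ) = (0 : ℝ) from by field_simp; ring]
      simp
    · field_simp
      ring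
  rcases le_or_gt 0 (R * (1 + R ^ 2) * Q + (3 * R ^ 2 - 1) * P) with hA0 | hA0
  · right
    rw [hψ, hσ, _root_.abs_of_nonneg hA0, Prod.mk.injEq]
    exact ⟨haxis, hprofile⟩
  · left
    rw [hψ, hσ, _root_.abs_of_neg hA0, Prod.mk.injEq]
    constructor
    · rw [show -((1 + R ^ 2) ^ 2 * (P + R * Q) / (8 * R))
          + (1 + R ^ 2) * -(R * (1 + R ^ 2) * Q + (3 * R ^ 2 - 1) * P) / (8 * R)
          = -((1 + R ^ 2) ^ 2 * (P + R * Q) / (8 * R))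
          - (1 + R ^ 2) * (R * (1 + R ^ 2) * Q + (3 * R ^ 2 - 1) * P) / (8 * R) from by
        ring]
      exact hprofile
    · rw [show -((1 + R ^ 2) ^ 2 * (P + R * Q) / (8 * R))
          - (1 + R ^ 2) * -(R * (1 + R ^ 2) * Q + (3 * R ^ 2 - 1) * P) / (8 * R)
          = -((1 + R ^ 2) ^ 2 * (P + R * Q) / (8 * R))
          + (1 + R ^ 2) * (R * (1 + R ^ 2) * Q + (3 * R ^ 2 - 1) * P) / (8 * R) from by
        ring]
      exact haxis

end
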